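/- Let p be an odd prime. Every non-trivial complex irreducible representation of SL₂(𝔽_p) has dimension at least (p−1)/2. -/

import Mathlib

set_option maxRecDepth 40000
set_option maxHeartbeats 1000000
open Matrix Polynomial

namespace Stmt10Aux
variable (p : ℕ) [Fact (Nat.Prime p)]
abbrev G := Matrix.SpecialLinearGroup (Fin 2) (ZMod p)
variable {p}
def E (t : ZMod p) : G p := ⟨!![1, t; 0, 1], by simp [Matrix.det_fin_two_of]⟩
def F (t : ZMod p) : G p := ⟨!![1, 0; t, 1], by simp [Matrix.det_fin_two_of]⟩
def Wm : G p := ⟨!![0, -1; 1, 0], by simp [Matrix.det_fin_two_of]⟩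
def D (a : (ZMod p)ˣ) : G p := ⟨!![(a : ZMod p), 0; 0, ((a⁻¹ : (ZMod p)ˣ) : ZMod p)], by
  rw [Matrix.det_fin_two_of, ← Units.val_mul]; simp⟩

lemma E_mul (t s : ZMod p) : E t * E s = E (t + s) := by
  apply Subtype.ext
  simp only [Matrix.SpecialLinearGroup.coe_mul]
  simp only [E, Matrix.SpecialLinearGroup.coe_mul, Matrix.mul_fin_two]
  norm_num [add_comm]

lemma E_one_eq : (E 0 : G p) = 1 := by
  apply Subtype.ext
  simp only [E, Matrix.SpecialLinearGroup.coe_one]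
  rw [Matrix.eta_fin_two (1 : Matrix (Fin 2) (Fin 2) (ZMod p))]
  norm_num

lemma E_pow (n : ℕ) : (E 1 : G p) ^ n = E n := by
  induction n with
  | zero => simpa using E_one_eq.symm
  | succ n ih => rw [pow_succ, ih, E_mul]; norm_num

end Stmt10Aux
namespace Stmt10Aux
variable {p : ℕ} [Fact (Nat.Prime p)]

def Wm' : G p := ⟨!![0, 1; -1, 0], by simp [Matrix.det_fin_two_of]⟩

lemma Wm_mul_Wm' : (Wm * Wm' : G p) = 1 := by
  apply Subtype.ext
  simp only [Matrix.SpecialLinearGroup.coe_mul]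
  simp only [Wm, Wm', Matrix.SpecialLinearGroup.coe_mul, Matrix.mul_fin_two,
    Matrix.SpecialLinearGroup.coe_one]
  rw [Matrix.eta_fin_two (1 : Matrix (Fin 2) (Fin 2) (ZMod p))]
  norm_num

lemma F_eq (t : ZMod p) : F t = Wm * E (-t) * Wm' := by
  apply Subtype.ext
  simp only [Matrix.SpecialLinearGroup.coe_mul]
  simp only [F, E, Wm, Wm', Matrix.SpecialLinearGroup.coe_mul, Matrix.mul_fin_two]
  norm_num

lemma F_mul (t s : ZMod p) : F t * F s = F (t + s) := by
  apply Subtype.ext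
  simp only [Matrix.SpecialLinearGroup.coe_mul]
  simp only [F, Matrix.SpecialLinearGroup.coe_mul, Matrix.mul_fin_two]
  norm_num [add_comm]

lemma F_zero : (F 0 : G p) = 1 := by
  apply Subtype.ext
  simp only [F, Matrix.SpecialLinearGroup.coe_one]
  rw [Matrix.eta_fin_two (1 : Matrix (Fin 2) (Fin 2) (ZMod p))]
  norm_num

lemma decomp1 (A : G p) (hc : (A : Matrix (Fin 2) (Fin 2) (ZMod p)) 1 0 ≠ 0) :
    A = E (((A : Matrix (Fin 2) (Fin 2) (ZMod p)) 0 0 - 1) / (A : Matrix (Fin 2) (Fin 2) (ZMod p)) 1 0)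
      * F ((A : Matrix (Fin 2) (Fin 2) (ZMod p)) 1 0)
      * E (((A : Matrix (Fin 2) (Fin 2) (ZMod p)) 1 1 - 1) / (A : Matrix (Fin 2) (Fin 2) (ZMod p)) 1 0) := by
  have hdet : (A : Matrix (Fin 2) (Fin 2) (ZMod p)) 0 0 * (A : Matrix (Fin 2) (Fin 2) (ZMod p)) 1 1
      - (A : Matrix (Fin 2) (Fin 2) (ZMod p)) 0 1 * (A : Matrix (Fin 2) (Fin 2) (ZMod p)) 1 0 = 1 := by
    rw [← Matrix.det_fin_two]; exact A.2
  apply Subtype.ext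
  set a := (A : Matrix (Fin 2) (Fin 2) (ZMod p)) 0 0
  set b := (A : Matrix (Fin 2) (Fin 2) (ZMod p)) 0 1
  set c := (A : Matrix (Fin 2) (Fin 2) (ZMod p)) 1 0
  set d := (A : Matrix (Fin 2) (Fin 2) (ZMod p)) 1 1
  simp only [Matrix.SpecialLinearGroup.coe_mul]
  simp only [E, F, Matrix.SpecialLinearGroup.coe_mul, Matrix.mul_fin_two]
  apply Matrix.ext
  intro i j
  fin_cases i <;> fin_cases j <;>
    simp only [E, F, Matrix.mul_fin_two, Matrix.cons_val', Matrix.cons_val_zero,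
      Matrix.cons_val_one, Matrix.head_cons, Matrix.head_fin_const, Matrix.empty_val',
      Matrix.cons_val_fin_one, Matrix.of_apply, Fin.isValue, Fin.zero_eta, Fin.mk_one] <;>
    field_simp <;> first | ring1 | linear_combination hdet | linear_combination -hdet | linear_combination 2*hdet | linear_combination -2*hdet

end Stmt10Aux
namespace Stmt10Aux
variable {p : ℕ} [Fact (Nat.Prime p)]
variable {V : Type} [AddCommGroup V] [Module ℂ V]

lemma E_natCast (n : ℕ) : (E 1 : G p) ^ n = E (n : ZMod p) := E_pow n

lemma rho_trivial (ρ : Representation ℂ (G p) V) (hE1 : ρ (E 1) = 1) (A : G p) :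
    ρ A = 1 := by
  have hE : ∀ t : ZMod p, ρ (E t) = 1 := by
    intro t
    have : E t = (E 1 : G p) ^ t.val := by rw [E_pow]; congr 1; simp [ZMod.natCast_val, ZMod.cast_id]
    rw [this, _root_.map_pow, hE1, one_pow]
  have hF : ∀ t : ZMod p, ρ (F t) = 1 := by
    intro t
    rw [F_eq, _root_.map_mul, _root_.map_mul, hE, mul_one, ← _root_.map_mul, Wm_mul_Wm', _root_.map_one]
  have h1 : ∀ B : G p, (B : Matrix (Fin 2) (Fin 2) (ZMod p)) 1 0 ≠ 0 → ρ B = 1 := by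
    intro B hc
    rw [decomp1 B hc, _root_.map_mul, _root_.map_mul, hE, hF, hE, mul_one, mul_one]
  by_cases hc : (A : Matrix (Fin 2) (Fin 2) (ZMod p)) 1 0 ≠ 0
  · exact h1 A hc
  · push_neg at hc
    have hdet : (A : Matrix (Fin 2) (Fin 2) (ZMod p)) 0 0 * (A : Matrix (Fin 2) (Fin 2) (ZMod p)) 1 1
        - (A : Matrix (Fin 2) (Fin 2) (ZMod p)) 0 1 * (A : Matrix (Fin 2) (Fin 2) (ZMod p)) 1 0 = 1 := by
      rw [← Matrix.det_fin_two]; exact A.2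
    have hd : (A : Matrix (Fin 2) (Fin 2) (ZMod p)) 1 1 ≠ 0 := by
      intro h
      rw [hc, h] at hdet
      simp at hdet
    have hAF : ((A * F 1 : G p) : Matrix (Fin 2) (Fin 2) (ZMod p)) 1 0 ≠ 0 := by
      have : ((A * F 1 : G p) : Matrix (Fin 2) (Fin 2) (ZMod p)) 1 0
          = (A : Matrix (Fin 2) (Fin 2) (ZMod p)) 1 0 + (A : Matrix (Fin 2) (Fin 2) (ZMod p)) 1 1 := by
        simp only [Matrix.SpecialLinearGroup.coe_mul]
        simp [F, Matrix.SpecialLinearGroup.coe_mul, Matrix.mul_apply, Fin.sum_univ_two]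
      rw [this, hc, zero_add]
      exact hd
    have hA : A = (A * F 1) * F (-1) := by
      rw [mul_assoc, F_mul]
      norm_num [F_zero]
    rw [hA, _root_.map_mul, h1 _ hAF, hF, mul_one]

end Stmt10Aux
namespace Stmt10Aux
variable {p : ℕ} [Fact (Nat.Prime p)]
variable {V : Type} [AddCommGroup V] [Module ℂ V]

lemma D_mul (a b : (ZMod p)ˣ) : (D a * D b : G p) = D (a * b) := by
  apply Subtype.ext
  rw [Matrix.SpecialLinearGroup.coe_mul]
  simp only [D]
  rw [Matrix.mul_fin_two]
  have h : ((a*b:(ZMod p)ˣ)⁻¹ : (ZMod p)ˣ) = a⁻¹ * b⁻¹ := by rw [_root_.mul_inv_rev, mul_comm]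
  rw [h, Units.val_mul, Units.val_mul]
  simp only [mul_zero, zero_mul, add_zero, zero_add]

lemma D_one : (D 1 : G p) = 1 := by
  apply Subtype.ext
  simp only [D, Matrix.SpecialLinearGroup.coe_one, inv_one, Units.val_one]
  rw [Matrix.eta_fin_two (1 : Matrix (Fin 2) (Fin 2) (ZMod p))]
  simp only [Matrix.one_apply_eq, Matrix.one_apply_ne, Fin.isValue, ne_eq, Fin.zero_eq_one_iff,
    Nat.succ_ne_self, not_false_eq_true, Fin.one_eq_zero_iff, OfNat.ofNat_ne_one]

lemma E_mul_D (a : (ZMod p)ˣ) :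
    (E 1 * D a : G p) = D a * E (((a⁻¹ : (ZMod p)ˣ) : ZMod p) ^ 2) := by
  apply Subtype.ext
  rw [Matrix.SpecialLinearGroup.coe_mul, Matrix.SpecialLinearGroup.coe_mul]
  simp only [E, D]
  rw [Matrix.mul_fin_two, Matrix.mul_fin_two]
  have h : (a : ZMod p) * ((a⁻¹ : (ZMod p)ˣ) : ZMod p) ^ 2 = ((a⁻¹ : (ZMod p)ˣ) : ZMod p) := by
    rw [← Units.val_pow_eq_pow_val, ← Units.val_mul]
    congr 1
    group
  simp only [mul_zero, zero_mul, add_zero, zero_add, one_mul, mul_one, h]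

lemma eigen_orbit (ρ : Representation ℂ (G p) V) {ζ : ℂ} {v : V}
    (hv : Module.End.HasEigenvector (ρ (E 1)) ζ v) (a : (ZMod p)ˣ) :
    Module.End.HasEigenvector (ρ (E 1))
      (ζ ^ ((((a⁻¹ : (ZMod p)ˣ) : ZMod p) ^ 2).val)) (ρ (D a) v) := by
  set c : ZMod p := ((a⁻¹ : (ZMod p)ˣ) : ZMod p) ^ 2 with hc
  have hne : ρ (D a) v ≠ 0 := by
    intro h
    have : ρ (D a⁻¹) (ρ (D a) v) = v := by
      rw [← Module.End.mul_apply, ← _root_.map_mul, D_mul, inv_mul_cancel, D_one, _root_.map_one,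
        Module.End.one_apply]
    rw [h, _root_.map_zero] at this
    exact hv.2 this.symm
  have hEc : ρ (E c) = (ρ (E 1)) ^ c.val := by
    rw [← _root_.map_pow, E_pow]
    congr 1
    simp [ZMod.natCast_val, ZMod.cast_id]
  have key : ρ (E 1) (ρ (D a) v) = (ζ ^ c.val) • (ρ (D a) v) := by
    rw [← Module.End.mul_apply, ← _root_.map_mul, E_mul_D, ← hc, _root_.map_mul,
      Module.End.mul_apply, hEc, hv.pow_apply, _root_.map_smul]
  exact ⟨Module.End.mem_eigenspace_iff.mpr key, hne⟩

end Stmt10Aux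
open Polynomial
namespace Stmt10Aux

lemma exists_primitive_eigenvalue {V : Type} [AddCommGroup V] [Module ℂ V]
    [FiniteDimensional ℂ V] [Nontrivial V] {p : ℕ} (hp : 0 < p)
    {f : Module.End ℂ V} (hfp : f ^ p = 1) (hf : f ≠ 1) :
    ∃ ζ : ℂ, ζ ≠ 1 ∧ ζ ^ p = 1 ∧ f.HasEigenvalue ζ := by
  have hint : IsIntegral ℂ f := Algebra.IsIntegral.isIntegral f
  have haev : aeval f (X ^ p - 1 : ℂ[X]) = 0 := by
    simp [hfp]
  have hdvd : minpoly ℂ f ∣ X ^ p - 1 := minpoly.dvd ℂ f haev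
  have hsep : (X ^ p - 1 : ℂ[X]).Separable :=
    X_pow_sub_one_separable_iff.mpr (by exact_mod_cast Nat.cast_ne_zero.mpr hp.ne')
  have msep : (minpoly ℂ f).Separable := hsep.of_dvd hdvd
  have hmonic : (minpoly ℂ f).Monic := minpoly.monic hint
  have hnd : 0 < (minpoly ℂ f).natDegree := minpoly.natDegree_pos hint
  have hcard : (minpoly ℂ f).roots.card = (minpoly ℂ f).natDegree :=
    splits_iff_card_roots.mp (IsAlgClosed.splits _)
  have hnodup : (minpoly ℂ f).roots.Nodup := Polynomial.nodup_roots msep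
  -- find a root ≠ 1
  obtain ⟨ζ, hζmem, hζne⟩ : ∃ ζ ∈ (minpoly ℂ f).roots, ζ ≠ 1 := by
    by_contra h
    push_neg at h
    have hsub : (minpoly ℂ f).roots ⊆ {1} := by
      intro r hr
      rw [Multiset.mem_singleton]
      exact h r hr
    have hle : (minpoly ℂ f).roots.card ≤ 1 := by
      simpa using Multiset.card_le_card ((Multiset.le_iff_subset hnodup).mpr hsub)
    have h1 : (minpoly ℂ f).natDegree = 1 := le_antisymm (hcard ▸ hle) hnd
    have hm : minpoly ℂ f = X + C ((minpoly ℂ f).coeff 0) := hmonic.eq_X_add_C h1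
    have hroot : (minpoly ℂ f).IsRoot 1 := by
      have : ∃ r, r ∈ (minpoly ℂ f).roots := by
        rw [← Multiset.card_pos_iff_exists_mem, hcard, h1]; norm_num
      obtain ⟨r, hr⟩ := this
      have := h r hr
      subst this
      exact isRoot_of_mem_roots hr
    have hc : (1:ℂ) + (minpoly ℂ f).coeff 0 = 0 := by
      have h2 := hroot
      rw [hm] at h2
      simpa [IsRoot] using h2
    have : minpoly ℂ f = X - 1 := by
      rw [hm, show ((minpoly ℂ f).coeff 0) = -1 by linear_combination hc, _root_.map_neg, _root_.map_one]
      ring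
    have : aeval f (X - 1 : ℂ[X]) = 0 := this ▸ minpoly.aeval ℂ f
    simp only [_root_.map_sub, aeval_X, _root_.map_one] at this
    exact hf (by rwa [sub_eq_zero] at this)
  refine ⟨ζ, hζne, ?_, Module.End.hasEigenvalue_of_isRoot (isRoot_of_mem_roots hζmem)⟩
  have : (X ^ p - 1 : ℂ[X]).IsRoot ζ := by
    obtain ⟨s, hs⟩ := hdvd
    have := isRoot_of_mem_roots hζmem
    rw [IsRoot] at this ⊢
    rw [hs, eval_mul, this, zero_mul]
  simpa [IsRoot, sub_eq_zero] using this

end Stmt10Aux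
namespace Stmt10Aux

lemma card_sq_range (p : ℕ) [Fact p.Prime] (hodd : p ≠ 2) :
    Nat.card (MonoidHom.range (powMonoidHom 2 : (ZMod p)ˣ →* (ZMod p)ˣ)) = (p - 1) / 2 := by
  haveI : Fact (2 < p) :=
    ⟨lt_of_le_of_ne (Fact.out (p := p.Prime)).two_le (Ne.symm hodd)⟩
  set sq := (powMonoidHom 2 : (ZMod p)ˣ →* (ZMod p)ˣ)
  have hne : (1 : (ZMod p)ˣ) ≠ -1 := by
    rw [Ne, Units.ext_iff, Units.val_one, Units.val_neg, Units.val_one]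
    exact fun h => ZMod.neg_one_ne_one h.symm
  have hker : ((MonoidHom.ker sq : Subgroup (ZMod p)ˣ) : Set (ZMod p)ˣ) = {1, -1} := by
    ext x
    simp only [SetLike.mem_coe, MonoidHom.mem_ker, Set.mem_insert_iff, Set.mem_singleton_iff]
    rw [powMonoidHom_apply]
    constructor
    · intro h
      have : (x : ZMod p) ^ 2 = 1 := by
        rw [← Units.val_pow_eq_pow_val, h, Units.val_one]
      rcases sq_eq_one_iff.mp this with h' | h'
      · left; exact Units.ext (by simp [h'])
      · right; exact Units.ext (by simp [h'])
    · rintro (rfl | rfl) <;> simp [pow_two]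
  have hkcard : Nat.card (MonoidHom.ker sq) = 2 := by
    rw [← SetLike.coe_sort_coe, hker, Nat.card_coe_set_eq, Set.ncard_pair hne]
  have hquot : Nat.card (ZMod p)ˣ = Nat.card ((ZMod p)ˣ ⧸ MonoidHom.ker sq) * 2 := by
    rw [← hkcard]
    exact Subgroup.card_eq_card_quotient_mul_card_subgroup _
  have hrange : Nat.card (MonoidHom.range sq) = Nat.card ((ZMod p)ˣ ⧸ MonoidHom.ker sq) :=
    (Nat.card_congr (QuotientGroup.quotientKerEquivRange sq).toEquiv).symm
  have hunits : Nat.card (ZMod p)ˣ = p - 1 := by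
    rw [Nat.card_eq_fintype_card, ZMod.card_units]
  rw [hrange]
  omega

end Stmt10Aux
namespace Stmt10Aux
variable {p : ℕ} [Fact (Nat.Prime p)]
variable {V : Type} [AddCommGroup V] [Module ℂ V]

lemma finiteDim (ρ : Representation ℂ (G p) V)
    (hirr : ∀ W : Submodule ℂ V,
      (∀ (g : G p) (v : V), v ∈ W → ρ g v ∈ W) → W = ⊥ ∨ W = ⊤)
    {w : V} (hw0 : w ≠ 0) : FiniteDimensional ℂ V := by
  set W := Submodule.span ℂ (Set.range fun h : G p => ρ h w) with hWdef
  have hWinv : ∀ (g : G p) (v : V), v ∈ W → ρ g v ∈ W := by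
    intro g v hv
    have hmap : Submodule.map (ρ g) W ≤ W := by
      rw [hWdef, Submodule.map_span, Submodule.span_le]
      rintro _ ⟨_, ⟨h, rfl⟩, rfl⟩
      exact Submodule.subset_span ⟨g * h, by simp only []; rw [_root_.map_mul]; rfl⟩
    exact hmap ⟨v, hv, rfl⟩
  rcases hirr W hWinv with h | h
  · exfalso
    have hwW : w ∈ W := Submodule.subset_span ⟨1, by simp only []; rw [_root_.map_one]; rfl⟩
    rw [h] at hwW
    exact hw0 ((Submodule.mem_bot ℂ).mp hwW)
  · have hfin : Module.Finite ℂ W := Module.Finite.span_of_finite ℂ (Set.finite_range _)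
    have htop : Module.Finite ℂ (⊤ : Submodule ℂ V) := h ▸ hfin
    exact Module.Finite.equiv (Submodule.topEquiv)

end Stmt10Aux

open Stmt10Aux in
/-- Frobenius: for an odd prime `p`, every non-trivial complex
irreducible representation of `SL₂(𝔽_p)` has dimension at least `(p-1)/2`. -/
theorem stmt10 (p : ℕ) [Fact (Nat.Prime p)] (hodd : p ≠ 2)
    (V : Type) [AddCommGroup V] [Module ℂ V]
    (ρ : Representation ℂ (Matrix.SpecialLinearGroup (Fin 2) (ZMod p)) V)
    (hirr : ∀ W : Submodule ℂ V,
      (∀ (g : Matrix.SpecialLinearGroup (Fin 2) (ZMod p)) (v : V), v ∈ W → ρ g v ∈ W) →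
      W = ⊥ ∨ W = ⊤)
    (hnt : ∃ g, ρ g ≠ 1) :
    (p - 1) / 2 ≤ Module.finrank ℂ V := by
  classical
  obtain ⟨g₀, hg₀⟩ := hnt
  obtain ⟨w, hw⟩ : ∃ w, ρ g₀ w ≠ w := by
    by_contra h
    push_neg at h
    exact hg₀ (LinearMap.ext fun v => by rw [h v, Module.End.one_apply])
  have hw0 : w ≠ 0 := fun h => hw (by rw [h, _root_.map_zero])
  haveI : FiniteDimensional ℂ V := finiteDim ρ hirr hw0
  haveI : Nontrivial V := nontrivial_of_ne w 0 hw0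
  set f := ρ (E 1) with hf
  have hfne : f ≠ 1 := fun h => hg₀ (rho_trivial ρ h g₀)
  have hfp : f ^ p = 1 := by
    rw [hf, ← _root_.map_pow, E_pow, ZMod.natCast_self, E_one_eq, _root_.map_one]
  have hp : 0 < p := (Fact.out (p := p.Prime)).pos
  obtain ⟨ζ, hζ1, hζp, hev⟩ := exists_primitive_eigenvalue hp hfp hfne
  obtain ⟨v, hv⟩ := hev.exists_hasEigenvector
  have hord : orderOf ζ = p := by
    have hdvd := orderOf_dvd_of_pow_eq_one hζp
    rcases (Nat.Prime.eq_one_or_self_of_dvd Fact.out _ hdvd) with h | h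
    · exact absurd (orderOf_eq_one_iff.mp h) hζ1
    · exact h
  have hprim : IsPrimitiveRoot ζ p := hord ▸ IsPrimitiveRoot.orderOf ζ
  set S := MonoidHom.range (powMonoidHom 2 : (ZMod p)ˣ →* (ZMod p)ˣ) with hS
  haveI : Fintype S := Fintype.ofFinite _
  set μ : S → ℂ := fun b => ζ ^ (((b : (ZMod p)ˣ) : ZMod p)).val with hμ
  have hμinj : Function.Injective μ := by
    intro b c hbc
    have h1 := hprim.pow_inj (ZMod.val_lt _) (ZMod.val_lt _) hbc
    exact Subtype.ext (Units.ext (ZMod.val_injective p h1))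
  have hvec : ∀ b : S, ∃ x, Module.End.HasEigenvector f (μ b) x := by
    rintro ⟨b, a, ha⟩
    refine ⟨ρ (D a⁻¹) v, ?_⟩
    have h1 := eigen_orbit ρ hv a⁻¹
    rw [inv_inv] at h1
    have he : ((b : ZMod p)).val = (((a : ZMod p)) ^ 2).val := by
      rw [← Units.val_pow_eq_pow_val, show (a ^ 2 : (ZMod p)ˣ) = b from ha]
    simpa [hμ, he] using h1
  choose xs hxs using hvec
  have hli : LinearIndependent ℂ xs :=
    Module.End.eigenvectors_linearIndependent' f μ hμinj xs hxs
  have hcard : Fintype.card S = (p - 1) / 2 := by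
    rw [← Nat.card_eq_fintype_card]
    exact card_sq_range p hodd
  calc (p - 1) / 2 = Fintype.card S := hcard.symm
    _ ≤ Module.finrank ℂ V := hli.fintype_card_le_finrank
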